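/- Let a ≤ b be real numbers, h ≥ 0, and let f : ℝ → ℝ be convex on [a, b] with 0 ≤ f(t) ≤ h for all t ∈ [a, b]. Then the length of the graph of f over [a, b] — that is, the total variation on [a, b] of the map t ↦ (t, f(t)) ∈ ℝ² — satisfies b − a ≤ length ≤ (b − a) + 2h. In particular, as h → 0 the length of such a convex graph converges to b − a. -/

import Mathlib

open Set

/-- Once a convex function strictly increases, it keeps (weakly) increasing. -/
private lemma convex_once_up {a b : ℝ} {f : ℝ → ℝ} (hconv : ConvexOn ℝ (Set.Icc a b) f)
    {x y z w : ℝ} (hx : x ∈ Set.Icc a b) (hy : y ∈ Set.Icc a b) (hz : z ∈ Set.Icc a b)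
    (hw : w ∈ Set.Icc a b) (hxy : x ≤ y) (hyz : y ≤ z) (hzw : z ≤ w)
    (hfxy : f x < f y) : f z ≤ f w := by
  have hxy' : x < y := by
    rcases hxy.lt_or_eq with h | h
    · exact h
    · exact absurd hfxy (by rw [h]; exact lt_irrefl _)
  rcases hzw.lt_or_eq with hzw' | h
  · have hxw : x < w := hxy'.trans_le (hyz.trans hzw)
    have h1 : (f y - f x) / (y - x) ≤ (f w - f x) / (w - x) :=
      hconv.secant_mono hx hy hw hxy'.ne' hxw.ne' (hyz.trans hzw)
    have h2 : (f x - f w) / (x - w) ≤ (f z - f w) / (z - w) :=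
      hconv.secant_mono hw hx hz hxw.ne hzw'.ne (hxy.trans hyz)
    have e1 : (f x - f w) / (x - w) = (f w - f x) / (w - x) := by
      rw [← neg_div_neg_eq]; ring_nf
    have hs1 : 0 < (f y - f x) / (y - x) := div_pos (by linarith) (by linarith)
    have hs : 0 < (f z - f w) / (z - w) := lt_of_lt_of_le hs1 (by rw [e1] at h2; linarith)
    nlinarith [div_mul_cancel₀ (f z - f w) (sub_ne_zero.mpr hzw'.ne),
      mul_pos hs (sub_pos.mpr hzw')]
  · rw [h]

private lemma convex_sum_abs_le {a b h : ℝ} (_hh : 0 ≤ h) {f : ℝ → ℝ}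
    (hconv : ConvexOn ℝ (Set.Icc a b) f)
    (hbound : ∀ t ∈ Set.Icc a b, 0 ≤ f t ∧ f t ≤ h)
    (n : ℕ) (u : ℕ → ℝ) (hu : Monotone u) (us : ∀ i, u i ∈ Set.Icc a b) :
    ∑ i ∈ Finset.range n, |f (u (i + 1)) - f (u i)| ≤ 2 * h := by
  classical
  obtain ⟨k, hkn, hlow, hhigh⟩ :
      ∃ k ≤ n, (∀ i < k, f (u (i + 1)) ≤ f (u i)) ∧
        (∀ i, k ≤ i → i < n → f (u i) ≤ f (u (i + 1))) := by
    by_cases H : ∃ i, i < n ∧ f (u i) < f (u (i + 1))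
    · refine ⟨Nat.find H, (Nat.find_spec H).1.le, ?_, ?_⟩
      · intro i hi
        have := Nat.find_min H hi
        push_neg at this
        rcases lt_or_ge i n with hin | hin
        · linarith [this hin]
        · exact absurd ((Nat.find_spec H).1.trans_le hin) (not_lt.mpr hi.le)
      · intro i hki hin
        rcases eq_or_lt_of_le hki with rfl | hki'
        · exact (Nat.find_spec H).2.le
        · exact convex_once_up hconv (us (Nat.find H)) (us (Nat.find H + 1)) (us i)
            (us (i + 1)) (hu (Nat.le_succ _)) (hu hki') (hu (Nat.le_succ _))
            (Nat.find_spec H).2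
    · push_neg at H
      exact ⟨n, le_rfl, fun i hi => H i hi, fun i hki hin => absurd hin (not_lt.mpr hki)⟩
  have hsplit : ∑ i ∈ Finset.range n, |f (u (i + 1)) - f (u i)| =
      (∑ i ∈ Finset.range k, |f (u (i + 1)) - f (u i)|) +
        ∑ i ∈ Finset.Ico k n, |f (u (i + 1)) - f (u i)| := by
    rw [Finset.range_eq_Ico, ← Finset.sum_Ico_consecutive _ (Nat.zero_le k) hkn, ← Finset.range_eq_Ico]
  have e1 : ∑ i ∈ Finset.range k, |f (u (i + 1)) - f (u i)| = f (u 0) - f (u k) := by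
    rw [show (fun i => |f (u (i + 1)) - f (u i)|) = fun i => |f (u (i+1)) - f (u i)| from rfl]
    calc ∑ i ∈ Finset.range k, |f (u (i + 1)) - f (u i)|
        = ∑ i ∈ Finset.range k, (f (u i) - f (u (i + 1))) := by
          refine Finset.sum_congr rfl fun i hi => ?_
          rw [abs_of_nonpos (by linarith [hlow i (Finset.mem_range.mp hi)])]
          ring
      _ = f (u 0) - f (u k) := Finset.sum_range_sub' (fun i => f (u i)) k
  have e2 : ∑ i ∈ Finset.Ico k n, |f (u (i + 1)) - f (u i)| = f (u n) - f (u k) := by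
    calc ∑ i ∈ Finset.Ico k n, |f (u (i + 1)) - f (u i)|
        = ∑ i ∈ Finset.Ico k n, (f (u (i + 1)) - f (u i)) := by
          refine Finset.sum_congr rfl fun i hi => ?_
          rw [Finset.mem_Ico] at hi
          exact abs_of_nonneg (by linarith [hhigh i hi.1 hi.2])
      _ = (∑ i ∈ Finset.range n, (f (u (i + 1)) - f (u i))) -
            ∑ i ∈ Finset.range k, (f (u (i + 1)) - f (u i)) :=
          Finset.sum_Ico_eq_sub _ hkn
      _ = f (u n) - f (u k) := by
          rw [Finset.sum_range_sub (fun i => f (u i)), Finset.sum_range_sub (fun i => f (u i))]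
          ring
  have h0 := hbound (u 0) (us 0)
  have hk := hbound (u k) (us k)
  have hn := hbound (u n) (us n)
  rw [hsplit, e1, e2]; linarith

private lemma dist_curve (f : ℝ → ℝ) (s t : ℝ) :
    dist ((WithLp.equiv 2 (Fin 2 → ℝ)).symm ![s, f s])
        ((WithLp.equiv 2 (Fin 2 → ℝ)).symm ![t, f t]) =
      Real.sqrt (dist s t ^ 2 + dist (f s) (f t) ^ 2) := by
  rw [EuclideanSpace.dist_eq]
  congr 1
  simp [Fin.sum_univ_two]

/-- Key estimate in the proof of Lemma 3.1: the length (total variation) of the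
graph of a convex function `f` with `0 ≤ f ≤ h` over `[a, b]`, as a curve in the
Euclidean plane, lies between `b - a` and `(b - a) + 2h`. -/
theorem length_of_convex_graph
    (a b h : ℝ) (hab : a ≤ b) (hh : 0 ≤ h) (f : ℝ → ℝ)
    (hconv : ConvexOn ℝ (Set.Icc a b) f)
    (hbound : ∀ t ∈ Set.Icc a b, 0 ≤ f t ∧ f t ≤ h) :
    ENNReal.ofReal (b - a) ≤
        eVariationOn
          (fun t : ℝ => (WithLp.equiv 2 (Fin 2 → ℝ)).symm ![t, f t]) (Set.Icc a b) ∧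
      eVariationOn
          (fun t : ℝ => (WithLp.equiv 2 (Fin 2 → ℝ)).symm ![t, f t]) (Set.Icc a b) ≤
        ENNReal.ofReal ((b - a) + 2 * h) := by
  have ha : a ∈ Set.Icc a b := ⟨le_rfl, hab⟩
  have hb : b ∈ Set.Icc a b := ⟨hab, le_rfl⟩
  constructor
  · refine le_trans ?_ (eVariationOn.edist_le
      (fun t : ℝ => (WithLp.equiv 2 (Fin 2 → ℝ)).symm ![t, f t]) hb ha)
    rw [edist_dist, dist_curve]
    apply ENNReal.ofReal_le_ofReal
    have h1 : b - a ≤ dist b a := by rw [Real.dist_eq]; exact le_abs_self _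
    refine h1.trans (Real.le_sqrt_of_sq_le ?_)
    nlinarith [sq_nonneg (dist (f b) (f a))]
  · apply iSup_le
    rintro ⟨n, u, hu, us⟩
    dsimp only
    have step : ∀ i : ℕ,
        edist ((WithLp.equiv 2 (Fin 2 → ℝ)).symm ![u (i + 1), f (u (i + 1))])
            ((WithLp.equiv 2 (Fin 2 → ℝ)).symm ![u i, f (u i)]) ≤
          edist (u (i + 1)) (u i) + edist (f (u (i + 1))) (f (u i)) := by
      intro i
      rw [edist_dist, dist_curve, edist_dist, edist_dist,
        ← ENNReal.ofReal_add dist_nonneg dist_nonneg]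
      apply ENNReal.ofReal_le_ofReal
      rw [← Real.sqrt_sq (by positivity : (0:ℝ) ≤ dist (u (i+1)) (u i) + dist (f (u (i+1))) (f (u i)))]
      exact Real.sqrt_le_sqrt (by nlinarith [mul_nonneg (dist_nonneg :
        (0:ℝ) ≤ dist (u (i+1)) (u i)) (dist_nonneg : (0:ℝ) ≤ dist (f (u (i+1))) (f (u i)))])
    calc ∑ i ∈ Finset.range n,
          edist ((WithLp.equiv 2 (Fin 2 → ℝ)).symm ![u (i + 1), f (u (i + 1))])
            ((WithLp.equiv 2 (Fin 2 → ℝ)).symm ![u i, f (u i)])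
        ≤ ∑ i ∈ Finset.range n,
            (edist (u (i + 1)) (u i) + edist (f (u (i + 1))) (f (u i))) :=
          Finset.sum_le_sum fun i _ => step i
      _ = (∑ i ∈ Finset.range n, edist (u (i + 1)) (u i)) +
            ∑ i ∈ Finset.range n, edist (f (u (i + 1))) (f (u i)) :=
          Finset.sum_add_distrib
      _ ≤ ENNReal.ofReal (b - a) + ENNReal.ofReal (2 * h) := by
          refine add_le_add ?_ ?_
          · refine le_trans (eVariationOn.sum_le (f := fun x : ℝ => x) (n := n) hu us) ?_
            have hm : MonotoneOn (fun x : ℝ => x) (Set.Icc a b) := fun x _ y _ hxy => hxy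
            have := hm.eVariationOn_le ha hb
            rwa [Set.inter_self] at this
          · calc ∑ i ∈ Finset.range n, edist (f (u (i + 1))) (f (u i))
                = ENNReal.ofReal (∑ i ∈ Finset.range n, |f (u (i + 1)) - f (u i)|) := by
                  rw [ENNReal.ofReal_sum_of_nonneg fun i _ => abs_nonneg _]
                  exact Finset.sum_congr rfl fun i _ => by rw [edist_dist, Real.dist_eq]
              _ ≤ ENNReal.ofReal (2 * h) := ENNReal.ofReal_le_ofReal
                  (convex_sum_abs_le hh hconv hbound n u hu us)
      _ = ENNReal.ofReal ((b - a) + 2 * h) :=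
          (ENNReal.ofReal_add (by linarith) (by positivity)).symm
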